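/- For the Zak-OTFS basis φ_i[n] = (1/√N)·e^{(2πi/N)·⌊i/M⌋·⌊n/M⌋}·1{n ≡ i (mod M)} on Z_{MN}, the self-ambiguity function A_{φ_i}[k,l] = ∑_{n=0}^{MN−1} φ_i[n]·conj(φ_i[(n−k) mod MN])·e^{−(2πi/(MN))·l·(n−k)} is independent of i for all k ∈ {0,…,M−1} and l ∈ {0,…,N−1}: A_{φ_i}[k,l] = A_{φ_j}[k,l] for all i, j ∈ {0,…,MN−1}. -/

import Mathlib

open Complex Finset

/-- The Zak-OTFS basis element on `Z_{MN}`. -/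
noncomputable def zakBasis (M N i n : ℕ) : ℂ :=
  if n % M = i % M then
    (1 / Real.sqrt N) *
      Complex.exp (2 * Real.pi * Complex.I * ((i / M : ℕ) * (n / M : ℕ) : ℕ) / N)
  else 0

/-- Discrete self-ambiguity function of the `i`-th Zak-OTFS basis vector,
with `(n − k) mod MN` realized as `(n + MN − k) % (MN)`. -/
noncomputable def zakAmbiguity (M N : ℕ) (i k l : ℕ) : ℂ :=
  ∑ n ∈ Finset.range (M * N),
    zakBasis M N i n * (starRingEnd ℂ) (zakBasis M N i ((n + M * N - k) % (M * N))) *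
      Complex.exp (-(2 * Real.pi * Complex.I) * l * ((n : ℤ) - (k : ℤ)) / (M * N))

lemma basis_mul_conj (M N i n : ℕ) (hN : 0 < N) :
    zakBasis M N i n * (starRingEnd ℂ) (zakBasis M N i n) =
      if n % M = i % M then (1 / (N : ℂ)) else 0 := by
  unfold zakBasis
  by_cases h : n % M = i % M
  · simp only [h, if_true]
    set t : ℂ := 2 * Real.pi * Complex.I * ((i / M : ℕ) * (n / M : ℕ) : ℕ) / N with ht
    have hconj : (starRingEnd ℂ) t = -t := by
      rw [ht]
      simp only [map_div₀, map_mul, Complex.conj_I, Complex.conj_ofReal,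
        Complex.conj_natCast, map_ofNat]
      ring
    rw [map_mul, ← Complex.exp_conj, hconj]
    have h1 : (starRingEnd ℂ) ((1 : ℂ) / Real.sqrt N) = (1 : ℂ) / Real.sqrt N := by
      simp
    rw [h1]
    have hexp : Complex.exp t * Complex.exp (-t) = 1 := by
      rw [← Complex.exp_add]; simp
    have hs : ((Real.sqrt N : ℂ)) * (Real.sqrt N : ℂ) = (N : ℂ) := by
      rw [← Complex.ofReal_mul, Real.mul_self_sqrt (Nat.cast_nonneg N)]
      simp
    field_simp
    rw [hexp]
    rw [sq, hs]
  · simp [h]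

lemma amb_ne_zero (M N i k l : ℕ) (hN : 0 < N) (hk : k < M) (hkne : k ≠ 0) :
    zakAmbiguity M N i k l = 0 := by
  unfold zakAmbiguity
  apply Finset.sum_eq_zero
  intro n hn
  suffices h : zakBasis M N i n * (starRingEnd ℂ) (zakBasis M N i ((n + M * N - k) % (M * N))) = 0 by
    rw [h, zero_mul]
  unfold zakBasis
  by_cases h1 : n % M = i % M
  · by_cases h2 : ((n + M * N - k) % (M * N)) % M = i % M
    · exfalso
      have hdvd : M ∣ M * N := Dvd.intro N rfl
      have hm : ((n + M * N - k) % (M * N)) % M = (n + M * N - k) % M :=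
        Nat.mod_mod_of_dvd _ hdvd
      have hkle : k ≤ n + M * N := le_trans hk.le (le_trans (Nat.le_mul_of_pos_right M hN) (Nat.le_add_left _ _))
      have hadd : (n + M * N - k) + k = n + M * N := by omega
      have h3 : (n + M * N - k) % M = n % M := by rw [hm] at h2; rw [h2, h1]
      have h4 : (n + M * N) % M = n % M := Nat.add_mul_mod_self_left n M N
      have h5 : ((n + M * N - k) + k) % M = ((n + M * N - k) + 0) % M := by
        rw [hadd, h4, Nat.add_zero, h3]
      have h6 : k ≡ 0 [MOD M] := Nat.ModEq.add_left_cancel (Nat.ModEq.refl _) h5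
      have h7 : k % M = 0 := by simpa [Nat.ModEq] using h6
      rw [Nat.mod_eq_of_lt hk] at h7
      exact hkne h7
    · rw [if_neg h2, map_zero, mul_zero]
  · rw [if_neg h1, zero_mul]

lemma sum_resid (M N : ℕ) (hM : 0 < M) (r : ℕ) (hr : r < M) (f : ℕ → ℂ) :
    ∑ n ∈ Finset.range (M * N), (if n % M = r then f n else 0)
      = ∑ m ∈ Finset.range N, f (r + m * M) := by
  rw [← Finset.sum_filter]
  apply Finset.sum_nbij' (fun n => n / M) (fun m => r + m * M)
  · intro a ha
    simp only [Finset.mem_filter, Finset.mem_range] at ha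
    simp only [Finset.mem_range]
    exact Nat.div_lt_of_lt_mul ha.1
  · intro a ha
    simp only [Finset.mem_range] at ha
    simp only [Finset.mem_filter, Finset.mem_range]
    constructor
    · calc r + a * M < M + a * M := by omega
        _ = (a + 1) * M := by ring
        _ ≤ N * M := by
          apply Nat.mul_le_mul_right
          omega
        _ = M * N := by ring
    · simp [Nat.add_mul_mod_self_right, Nat.mod_eq_of_lt hr]
  · intro a ha
    simp only [Finset.mem_filter, Finset.mem_range] at ha
    have h := Nat.mod_add_div a M
    rw [ha.2] at h
    simp only [mul_comm]
    omega
  · intro a ha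
    simp only [Finset.mem_range] at ha
    rw [Nat.add_mul_div_right _ _ hM, Nat.div_eq_of_lt hr]
    omega
  · intro a ha
    simp only [Finset.mem_filter, Finset.mem_range] at ha
    have h := Nat.mod_add_div a M
    rw [ha.2] at h
    congr 1
    rw [mul_comm]
    omega

lemma amb_zero (M N i l : ℕ) (hM : 0 < M) (hN : 0 < N) (hi : i < M * N) :
    zakAmbiguity M N i 0 l =
      (1 / (N : ℂ)) * Complex.exp (-(2 * Real.pi * Complex.I) * l * ((i % M : ℕ) : ℂ) / (M * N)) *
        ∑ m ∈ Finset.range N, Complex.exp (-(2 * Real.pi * Complex.I) * l * m / N) := by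
  have hMN : 0 < M * N := Nat.mul_pos hM hN
  unfold zakAmbiguity
  simp only [Nat.sub_zero, Nat.cast_zero, Int.cast_zero, sub_zero]
  have hstep : ∀ n ∈ Finset.range (M * N),
      zakBasis M N i n * (starRingEnd ℂ) (zakBasis M N i ((n + M * N) % (M * N))) *
        Complex.exp (-(2 * Real.pi * Complex.I) * l * (((n : ℤ) : ℂ)) / (M * N))
      = if n % M = i % M then
          (1 / (N : ℂ)) * Complex.exp (-(2 * Real.pi * Complex.I) * l * n / (M * N)) else 0 := by
    intro n hn
    simp only [Finset.mem_range] at hn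
    have hmod : (n + M * N) % (M * N) = n := by
      rw [Nat.add_mod_right]
      exact Nat.mod_eq_of_lt hn
    rw [hmod, basis_mul_conj M N i n hN]
    by_cases h : n % M = i % M
    · simp only [h, if_true]
      norm_cast
    · simp [h]
  rw [Finset.sum_congr rfl hstep]
  rw [sum_resid M N hM (i % M) (Nat.mod_lt i hM) _]
  rw [Finset.mul_sum]
  apply Finset.sum_congr rfl
  intro m hm
  rw [mul_assoc (1 / (N : ℂ)), ← Complex.exp_add]
  congr 2
  have hM' : (M : ℂ) ≠ 0 := Nat.cast_ne_zero.mpr (by omega)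
  have hN' : (N : ℂ) ≠ 0 := Nat.cast_ne_zero.mpr (by omega)
  push_cast
  field_simp
  ring

lemma geom_zero (N l : ℕ) (hN : 0 < N) (hl : l < N) (hlne : l ≠ 0) :
    ∑ m ∈ Finset.range N, Complex.exp (-(2 * Real.pi * Complex.I) * l * m / N) = 0 := by
  have hN' : (N : ℂ) ≠ 0 := Nat.cast_ne_zero.mpr (by omega)
  set x : ℂ := Complex.exp (-(2 * Real.pi * Complex.I) / N) with hx
  have hxm : ∀ m : ℕ, Complex.exp (-(2 * Real.pi * Complex.I) * l * m / N) = (x ^ (l * m)) := by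
    intro m
    rw [hx, ← Complex.exp_nat_mul]
    congr 1
    push_cast
    ring
  have hsum : ∑ m ∈ Finset.range N, Complex.exp (-(2 * Real.pi * Complex.I) * l * m / N)
      = ∑ m ∈ Finset.range N, (x ^ l) ^ m := by
    apply Finset.sum_congr rfl
    intro m _
    rw [hxm, pow_mul]
  rw [hsum]
  have hxlN : (x ^ l) ^ N = 1 := by
    rw [← pow_mul, hx, ← Complex.exp_nat_mul]
    have heq : (↑(l * N) : ℂ) * (-(2 * Real.pi * Complex.I) / N) = (-(l : ℤ)) * (2 * Real.pi * Complex.I) := by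
      push_cast
      field_simp
    rw [heq]
    exact_mod_cast Complex.exp_int_mul_two_pi_mul_I (-(l : ℤ))
  have hne : x ^ l ≠ 1 := by
    rw [hx, ← Complex.exp_nat_mul]
    intro hcon
    rw [Complex.exp_eq_one_iff] at hcon
    obtain ⟨n, hn⟩ := hcon
    have h2pi : (2 * (Real.pi : ℂ) * Complex.I) ≠ 0 := by
      simp [Real.pi_ne_zero, Complex.I_ne_zero]
    have h3 : (-(l : ℂ)) * (2 * Real.pi * Complex.I) = ((n : ℂ) * N) * (2 * Real.pi * Complex.I) := by
      have hn' : (l : ℂ) * (-(2 * Real.pi * Complex.I)) = (n : ℂ) * (2 * Real.pi * Complex.I) * N := by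
        field_simp at hn
        linear_combination (2 * Real.pi * Complex.I) * hn
      linear_combination hn'
    have h4 : -(l : ℂ) = (n : ℂ) * N := mul_right_cancel₀ h2pi h3
    have h5 : -(l : ℤ) = n * N := by exact_mod_cast h4
    have h6 : (N : ℤ) ∣ (l : ℤ) := ⟨-n, by linarith⟩
    have h7 : N ∣ l := Int.ofNat_dvd.mp (by exact_mod_cast h6)
    have := Nat.le_of_dvd (by omega) h7
    omega
  rw [geom_sum_eq hne, hxlN]
  simp

/-- Predictability of Zak-OTFS: the self-ambiguity function is independent of
the carrier index on the fundamental domain `k ∈ {0,…,M−1}`, `l ∈ {0,…,N−1}`. -/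
theorem zak_predictable (M N : ℕ) (hM : 2 ≤ M) (hN : 0 < N)
    (k l : ℕ) (hk : k < M) (hl : l < N) :
    ∀ i j, i < M * N → j < M * N →
      zakAmbiguity M N i k l = zakAmbiguity M N j k l := by
  intro i j hi hj
  by_cases hkz : k = 0
  · subst hkz
    rw [amb_zero M N i l (by omega) hN hi, amb_zero M N j l (by omega) hN hj]
    by_cases hlz : l = 0
    · subst hlz
      simp
    · rw [geom_zero N l hN hl hlz]
      simp
  · rw [amb_ne_zero M N i k l hN hk hkz, amb_ne_zero M N j k l hN hk hkz]
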